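/- Let m ≥ 2 and suppose P, P' ∈ ℝ[X] satisfy P·D_m = Q_m and P'·D_{m+1} = Q_{m+1}. Then P has exactly r_m = 2^m + 2^{m−2} − 2 distinct real roots; listing them as λ₁ < λ₂ < … < λ_{r_m}, they satisfy 0 < λ₁, λ_{r_m−1} < 5 < λ_{r_m} < 6. Moreover, for every 1 ≤ k ≤ r_m one has (−1)^{m+k−1}·P'(φ₋(λ_k)) > 0 and (−1)^{m+k}·P'(φ₊(λ_k)) > 0. -/

import Mathlib

open Function

noncomputable section

/-- The polynomial map `f(x) = x(5-x)`. -/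
def f (x : ℝ) : ℝ := x * (5 - x)

/-- `l(x) = x - 6`. -/
def lf (x : ℝ) : ℝ := x - 6

/-- `s(x) = (2-x)(4-x)(5-x) - (14-3x)`. -/
def sf (x : ℝ) : ℝ := (2 - x) * (4 - x) * (5 - x) - (14 - 3 * x)

/-- `r(x) = -2(2-x)(5-x)`. -/
def rf (x : ℝ) : ℝ := -2 * (2 - x) * (5 - x)

/-- The decreasing inverse branch of `f`. -/
def phim (x : ℝ) : ℝ := (5 - Real.sqrt (25 - 4 * x)) / 2

/-- The increasing inverse branch of `f`. -/
def phip (x : ℝ) : ℝ := (5 + Real.sqrt (25 - 4 * x)) / 2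

/-- `q m` is the function `q_m` from the paper, meaningful for `m ≥ 2`
(the values at `m = 0, 1` are junk values `1`, never used in the statements). -/
def q : ℕ → ℝ → ℝ
  | 0, _ => 1
  | 1, _ => 1
  | 2, x => sf x
  | 3, x => sf (f x) * sf x - rf (f x) * lf x
  | m + 4, x =>
      sf (f^[m + 2] x) * q (m + 3) x - rf (f^[m + 2] x) * lf (f^[m + 1] x) * q (m + 2) x

open Polynomial

/-- The polynomial `F = 5X - X²`. -/
def F : ℝ[X] := C 5 * X - X ^ 2

/-- `Fiter i` is the `i`-fold composition `F^{(i)}`, with `Fiter 0 = X`. -/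
def Fiter : ℕ → ℝ[X]
  | 0 => X
  | i + 1 => F.comp (Fiter i)

/-- Polynomial version of `l`. -/
def Lp : ℝ[X] := X - C 6

/-- Polynomial version of `s`. -/
def Sp : ℝ[X] := (C 2 - X) * (C 4 - X) * (C 5 - X) - (C 14 - C 3 * X)

/-- Polynomial version of `r`. -/
def Rp : ℝ[X] := -C 2 * (C 2 - X) * (C 5 - X)

/-- `Qp m` is the polynomial `Q_m`, satisfying `(Qp m).eval x = q_m x`,
defined by the same recursion as `q_m`; meaningful for `m ≥ 2`. -/
def Qp : ℕ → ℝ[X]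
  | 0 => 1
  | 1 => 1
  | 2 => Sp
  | 3 => Sp.comp (Fiter 1) * Sp - Rp.comp (Fiter 1) * Lp
  | m + 4 =>
      Sp.comp (Fiter (m + 2)) * Qp (m + 3) -
        Rp.comp (Fiter (m + 2)) * Lp.comp (Fiter (m + 1)) * Qp (m + 2)

/-- `Dp m = ∏_{i=0}^{m-3} (F^{(i)} - 2)`, with `Dp 2 = 1`. -/
def Dp (m : ℕ) : ℝ[X] := ∏ i ∈ Finset.range (m - 2), (Fiter i - C 2)

/-- `r_m = 2^m + 2^{m-2} - 2`. -/
def rm (m : ℕ) : ℕ := 2 ^ m + 2 ^ (m - 2) - 2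



open Function Polynomial

noncomputable section
namespace S5

/-! ### Basic facts about `f`, `phim`, `phip` -/

lemma f_phim {y : ℝ} (hy : y ≤ 25/4) : f (phim y) = y := by
  have h : (0:ℝ) ≤ 25 - 4 * y := by linarith
  have hs := Real.sq_sqrt h
  unfold f phim
  nlinarith [hs]

lemma f_phip {y : ℝ} (hy : y ≤ 25/4) : f (phip y) = y := by
  have h : (0:ℝ) ≤ 25 - 4 * y := by linarith
  have hs := Real.sq_sqrt h
  unfold f phip
  nlinarith [hs]

lemma sqrt_lt_five {y : ℝ} (hy : 0 < y) : Real.sqrt (25 - 4*y) < 5 := by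
  have h2 : (25:ℝ) - 4*y < 5^2 := by nlinarith
  calc Real.sqrt (25-4*y) < 5 := by
        rcases le_or_gt (25 - 4*y) 0 with h|h
        · rw [Real.sqrt_eq_zero' .. |>.mpr h]; norm_num
        · exact (Real.sqrt_lt' (by norm_num)).mpr h2


lemma sqrt_gt_one {y : ℝ} (hy : y < 6) : 1 < Real.sqrt (25 - 4*y) := by
  have : (1:ℝ) < 25 - 4*y := by linarith
  nlinarith [Real.sq_sqrt (show (0:ℝ) ≤ 25 - 4*y by linarith),
    Real.sqrt_nonneg (25 - 4*y)]

lemma phim_pos {y : ℝ} (hy : 0 < y) : 0 < phim y := by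
  have := sqrt_lt_five hy; unfold phim; linarith

lemma phim_lt_two {y : ℝ} (hy : y < 6) : phim y < 2 := by
  have := sqrt_gt_one hy; unfold phim; linarith

lemma phip_gt {y : ℝ} (hy : y < 6) : 3 < phip y := by
  have := sqrt_gt_one hy; unfold phip; linarith

lemma phip_lt_five {y : ℝ} (hy : 0 < y) : phip y < 5 := by
  have := sqrt_lt_five hy; unfold phip; linarith

lemma phim_strictMono {a b : ℝ} (ha : a < b) (hb : b ≤ 25/4) : phim a < phim b := by
  have h1 : (0:ℝ) ≤ 25 - 4*b := by linarith
  have : Real.sqrt (25 - 4*b) < Real.sqrt (25 - 4*a) :=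
    Real.sqrt_lt_sqrt h1 (by linarith)
  unfold phim; linarith

lemma phip_strictAnti {a b : ℝ} (ha : a < b) (hb : b ≤ 25/4) : phip b < phip a := by
  have h1 : (0:ℝ) ≤ 25 - 4*b := by linarith
  have : Real.sqrt (25 - 4*b) < Real.sqrt (25 - 4*a) :=
    Real.sqrt_lt_sqrt h1 (by linarith)
  unfold phip; linarith

lemma phim_le {y : ℝ} : phim y ≤ 5/2 := by
  have := Real.sqrt_nonneg (25 - 4*y); unfold phim; linarith

lemma phip_ge {y : ℝ} : 5/2 ≤ phip y := by
  have := Real.sqrt_nonneg (25 - 4*y); unfold phip; linarith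

/-- f is strictly increasing left of 5/2 -/
lemma f_lt_f_left {a b : ℝ} (hab : a < b) (hb : b ≤ 5/2) : f a < f b := by
  unfold f; nlinarith

/-- f is strictly decreasing right of 5/2 -/
lemma f_lt_f_right {a b : ℝ} (hab : a < b) (ha : 5/2 ≤ a) : f b < f a := by
  unfold f; nlinarith

/-! ### Polynomial eval helpers -/

lemma evalF (x : ℝ) : F.eval x = f x := by simp [F, f]; ring

lemma eval_phim {y : ℝ} (hy : y ≤ 25/4) : F.eval (phim y) = y := by rw [evalF, f_phim hy]
lemma eval_phip {y : ℝ} (hy : y ≤ 25/4) : F.eval (phip y) = y := by rw [evalF, f_phip hy]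

/-! ### IVT for polynomials -/

lemma exists_root_Ioo {P : ℝ[X]} {a b : ℝ} (hab : a < b)
    (h : P.eval a * P.eval b < 0) : ∃ t ∈ Set.Ioo a b, P.eval t = 0 := by
  have hc : ContinuousOn (fun x => P.eval x) (Set.Icc a b) := (P.continuous_aeval).continuousOn
  rcases lt_or_ge (P.eval a) 0 with ha | ha
  · have hb : 0 < P.eval b := by nlinarith
    have : Set.Ioo (P.eval a) (P.eval b) ⊆ (fun x => P.eval x) '' Set.Ioo a b :=
      intermediate_value_Ioo hab.le hc
    obtain ⟨t, ht, h0⟩ := this ⟨ha, hb⟩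
    exact ⟨t, ht, h0⟩
  · have ha' : 0 < P.eval a := by
      rcases ha.lt_or_eq with h' | h'
      · exact h'
      · exfalso; rw [← h'] at h; simp at h
    have hb : P.eval b < 0 := by nlinarith
    have : Set.Ioo (P.eval b) (P.eval a) ⊆ (fun x => P.eval x) '' Set.Ioo a b :=
      intermediate_value_Ioo' hab.le hc
    obtain ⟨t, ht, h0⟩ := this ⟨hb, ha'⟩
    exact ⟨t, ht, h0⟩

/-! ### Strict monotonicity from adjacent steps -/

lemma strictMonoOn_of_succ {g : ℕ → ℝ} {lo hi : ℕ}
    (h : ∀ j, lo ≤ j → j + 1 ≤ hi → g j < g (j + 1)) :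
    StrictMonoOn g (Set.Icc lo hi) := by
  have key : ∀ d i, lo ≤ i → i + d + 1 ≤ hi → g i < g (i + d + 1) := by
    intro d
    induction d with
    | zero => intro i h1 h2; simpa using h i h1 (by omega)
    | succ n ih =>
      intro i h1 h2
      have h3 : g i < g (i + n + 1) := ih i h1 (by omega)
      have h4 : g (i + n + 1) < g (i + n + 1 + 1) := h (i + n + 1) (by omega) (by omega)
      have : i + (n+1) + 1 = i + n + 1 + 1 := by omega
      rw [this]
      exact h3.trans h4
  intro i hi' j hj' hij
  obtain ⟨hi1, hi2⟩ := hi'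
  obtain ⟨hj1, hj2⟩ := hj'
  have : j = i + (j - i - 1) + 1 := by omega
  rw [this]
  exact key _ i hi1 (by omega)

end S5
end


open Function Polynomial

noncomputable section
namespace S5

lemma icc_split (j r : ℕ) (hj : j ≤ r) :
    Finset.Icc 1 r = Finset.Icc 1 j ∪ Finset.Ioc j r := by
  ext x; simp only [Finset.mem_Icc, Finset.mem_union, Finset.mem_Ioc]; omega

lemma icc_disj (j r : ℕ) : Disjoint (Finset.Icc 1 j) (Finset.Ioc j r) := by
  rw [Finset.disjoint_left]
  intro a ha hb
  simp only [Finset.mem_Icc] at ha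
  simp only [Finset.mem_Ioc] at hb
  omega

/-- Product sign: `t` is above the first `j` of the `lam k` and below the rest. -/
lemma prod_sign {r j : ℕ} {lam : ℕ → ℝ} {t : ℝ} (hj : j ≤ r)
    (hlt : ∀ k, 1 ≤ k → k ≤ j → lam k < t)
    (hgt : ∀ k, j < k → k ≤ r → t < lam k) :
    0 < (-1 : ℝ) ^ (r - j) * ∏ k ∈ Finset.Icc 1 r, (t - lam k) := by
  rw [icc_split j r hj, Finset.prod_union (icc_disj j r)]
  have h1 : 0 < ∏ k ∈ Finset.Icc 1 j, (t - lam k) := by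
    apply Finset.prod_pos
    intro k hk
    simp only [Finset.mem_Icc] at hk
    have := hlt k hk.1 hk.2
    linarith
  have h2 : ∏ k ∈ Finset.Ioc j r, (t - lam k)
      = (-1 : ℝ) ^ (r - j) * ∏ k ∈ Finset.Ioc j r, (lam k - t) := by
    rw [← Nat.card_Ioc j r, ← Finset.prod_const (-1 : ℝ), ← Finset.prod_mul_distrib]
    apply Finset.prod_congr rfl
    intro k _; ring
  have h3 : 0 < ∏ k ∈ Finset.Ioc j r, (lam k - t) := by
    apply Finset.prod_pos
    intro k hk
    simp only [Finset.mem_Ioc] at hk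
    have := hgt k hk.1 hk.2
    linarith
  rw [h2]
  have h4 : ((-1 : ℝ) ^ (r - j)) ^ 2 = 1 := by
    rw [← pow_mul, mul_comm, pow_mul]; norm_num
  have h5 : (-1:ℝ)^(r-j) * ((∏ k ∈ Finset.Icc 1 j, (t - lam k)) *
      ((-1:ℝ)^(r-j) * ∏ k ∈ Finset.Ioc j r, (lam k - t)))
      = ((-1:ℝ)^(r-j))^2 * ((∏ k ∈ Finset.Icc 1 j, (t - lam k)) *
        (∏ k ∈ Finset.Ioc j r, (lam k - t))) := by ring
  rw [h5, h4, one_mul]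
  exact mul_pos h1 h3

/-- A polynomial of degree `r` with `r` distinct listed roots is (leading coeff times)
the product of the corresponding linear factors. -/
lemma prod_form {P : ℝ[X]} {r : ℕ} (hr : 0 < r) (hdeg : P.natDegree = r)
    {lam : ℕ → ℝ} (hmono : StrictMonoOn lam (Set.Icc 1 r))
    (hroots : ∀ k, 1 ≤ k → k ≤ r → P.eval (lam k) = 0) :
    P = C P.leadingCoeff * ∏ k ∈ Finset.Icc 1 r, (X - C (lam k)) := by
  have hP0 : P ≠ 0 := by
    intro h; rw [h] at hdeg; simp at hdeg; omega
  set M : Multiset ℝ := (Finset.Icc 1 r).val.map lam with hM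
  have hnodup : M.Nodup := by
    apply Multiset.Nodup.map_on
    · intro a ha b hb hab
      simp only [Finset.mem_val, Finset.mem_Icc] at ha hb
      exact hmono.injOn (Set.mem_Icc.mpr ha) (Set.mem_Icc.mpr hb) hab
    · exact (Finset.Icc 1 r).nodup
  have hcardM : Multiset.card M = r := by
    rw [hM, Multiset.card_map]; simp [Nat.card_Icc]
  have hle : M ≤ P.roots := by
    rw [Multiset.le_iff_count]
    intro a
    rcases Nat.eq_zero_or_pos (M.count a) with h0 | h0
    · omega
    · have haM : a ∈ M := by
        rw [← Multiset.count_pos]; omega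
      have h1 : M.count a ≤ 1 := Multiset.nodup_iff_count_le_one.mp hnodup a
      have haroot : P.IsRoot a := by
        rw [hM] at haM
        obtain ⟨k, hk, rfl⟩ := Multiset.mem_map.mp haM
        simp only [Finset.mem_val, Finset.mem_Icc] at hk
        exact hroots k hk.1 hk.2
      have : 0 < P.roots.count a := by
        rw [count_roots]
        exact (rootMultiplicity_pos hP0).mpr haroot
      omega
  have hcards : P.roots.card = r := by
    have h1 : P.roots.card ≤ r := hdeg ▸ P.card_roots'
    have h2 : r ≤ P.roots.card := hcardM ▸ Multiset.card_le_card hle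
    omega
  have hMroots : M = P.roots :=
    Multiset.eq_of_le_of_card_le hle (by omega)
  have hsplits : P.Splits :=
    splits_iff_card_roots.mpr (by rw [hcards, hdeg])
  have heq := hsplits.eq_prod_roots
  have h5 : (Multiset.map (fun a => X - C a) P.roots).prod
      = ∏ k ∈ Finset.Icc 1 r, (X - C (lam k)) := by
    rw [← hMroots, hM, Multiset.map_map]
    rfl
  conv_lhs => rw [heq, h5]

lemma eval_prod_form (c : ℝ) (r : ℕ) (lam : ℕ → ℝ) (t : ℝ) :
    (C c * ∏ k ∈ Finset.Icc 1 r, (X - C (lam k))).eval t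
      = c * ∏ k ∈ Finset.Icc 1 r, (t - lam k) := by
  simp [eval_prod]

lemma roots_char {c : ℝ} (hc : c ≠ 0) (r : ℕ) (lam : ℕ → ℝ) (t : ℝ) :
    (C c * ∏ k ∈ Finset.Icc 1 r, (X - C (lam k))).eval t = 0
      ↔ ∃ k : ℕ, 1 ≤ k ∧ k ≤ r ∧ lam k = t := by
  rw [eval_prod_form, mul_eq_zero]
  constructor
  · rintro (h | h)
    · exact absurd h hc
    · obtain ⟨k, hk, h0⟩ := Finset.prod_eq_zero_iff.mp h
      simp only [Finset.mem_Icc] at hk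
      exact ⟨k, hk.1, hk.2, by linarith⟩
  · rintro ⟨k, h1, h2, rfl⟩
    right
    apply Finset.prod_eq_zero (Finset.mem_Icc.mpr ⟨h1, h2⟩)
    ring

end S5
end


open Function Polynomial

noncomputable section
namespace S5

/-! ### Fiter basics -/

lemma Fiter_comp_F (i : ℕ) : (Fiter i).comp F = Fiter (i + 1) := by
  induction i with
  | zero => simp [Fiter]
  | succ n ih =>
    show (F.comp (Fiter n)).comp F = F.comp (Fiter (n+1))
    rw [Polynomial.comp_assoc, ih]

lemma Fiter_two : Fiter 2 = F.comp F := by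
  show F.comp (F.comp X) = F.comp F
  rw [Polynomial.comp_X]

lemma Fiter_comp_two (i : ℕ) : (Fiter i).comp (Fiter 2) = Fiter (i + 2) := by
  rw [Fiter_two, ← Polynomial.comp_assoc, Fiter_comp_F, Fiter_comp_F]

lemma Fiter_one : Fiter 1 = F := by
  show F.comp X = F
  rw [Polynomial.comp_X]

lemma Fiter_eval_zero (i : ℕ) : (Fiter i).eval 0 = 0 := by
  induction i with
  | zero => simp [Fiter]
  | succ n ih =>
    show (F.comp (Fiter n)).eval 0 = 0
    rw [eval_comp, ih]; simp [F]

lemma Dp_ne_zero (m : ℕ) : Dp m ≠ 0 := by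
  intro h
  have : (Dp m).eval 0 = 0 := by rw [h]; simp
  rw [Dp, eval_prod] at this
  obtain ⟨i, _, hi⟩ := Finset.prod_eq_zero_iff.mp this
  rw [eval_sub, Fiter_eval_zero, eval_C] at hi
  norm_num at hi

/-! ### Bottom recursion for Qp -/

lemma RpF : Rp.comp F = C 2 * (F - C 2) * (C 5 - F) := by
  rw [Rp]
  simp only [mul_comp, sub_comp, neg_comp, C_comp, X_comp]
  ring

/-- Bottom-corner expansion of the continuant. -/
lemma Qp_bottom : ∀ m, 2 ≤ m →
    Qp (m + 1) = Sp * (Qp m).comp F - Rp.comp F * Lp * (Qp (m - 1)).comp (Fiter 2) := by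
  have base2 : Qp 3 = Sp * (Qp 2).comp F - Rp.comp F * Lp * (Qp 1).comp (Fiter 2) := by
    show Sp.comp (Fiter 1) * Sp - Rp.comp (Fiter 1) * Lp = _
    rw [Fiter_one]
    show Sp.comp F * Sp - Rp.comp F * Lp = Sp * Sp.comp F - Rp.comp F * Lp * (1 : ℝ[X]).comp (Fiter 2)
    rw [Polynomial.one_comp]
    ring
  have base3 : Qp 4 = Sp * (Qp 3).comp F - Rp.comp F * Lp * (Qp 2).comp (Fiter 2) := by
    show Sp.comp (Fiter 2) * Qp 3 - Rp.comp (Fiter 2) * Lp.comp (Fiter 1) * Qp 2 = _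
    have h3 : (Qp 3).comp F = Sp.comp (Fiter 2) * Sp.comp F - Rp.comp (Fiter 2) * Lp.comp F := by
      show (Sp.comp (Fiter 1) * Sp - Rp.comp (Fiter 1) * Lp).comp F = _
      simp only [sub_comp, mul_comp]
      rw [Polynomial.comp_assoc, Polynomial.comp_assoc, Fiter_one]
      have : F.comp F = Fiter 2 := Fiter_two.symm
      rw [this]
    rw [h3]
    show _ = Sp * (Sp.comp (Fiter 2) * Sp.comp F - Rp.comp (Fiter 2) * Lp.comp F)
        - Rp.comp F * Lp * Sp.comp (Fiter 2)
    show Sp.comp (Fiter 2) * (Sp.comp (Fiter 1) * Sp - Rp.comp (Fiter 1) * Lp)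
        - Rp.comp (Fiter 2) * Lp.comp (Fiter 1) * Sp = _
    rw [Fiter_one]
    ring
  have base4 : Qp 5 = Sp * (Qp 4).comp F - Rp.comp F * Lp * (Qp 3).comp (Fiter 2) := by
    have h3F : (Qp 3).comp F = Sp.comp (Fiter 2) * Sp.comp F - Rp.comp (Fiter 2) * Lp.comp F := by
      show (Sp.comp (Fiter 1) * Sp - Rp.comp (Fiter 1) * Lp).comp F = _
      simp only [sub_comp, mul_comp]
      rw [Polynomial.comp_assoc, Polynomial.comp_assoc, Fiter_comp_F]
    have h32 : (Qp 3).comp (Fiter 2)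
        = Sp.comp (Fiter 3) * Sp.comp (Fiter 2) - Rp.comp (Fiter 3) * Lp.comp (Fiter 2) := by
      show (Sp.comp (Fiter 1) * Sp - Rp.comp (Fiter 1) * Lp).comp (Fiter 2) = _
      simp only [sub_comp, mul_comp]
      rw [Polynomial.comp_assoc, Polynomial.comp_assoc, Fiter_comp_two]
    have h4F : (Qp 4).comp F = Sp.comp (Fiter 3) * (Qp 3).comp F
        - Rp.comp (Fiter 3) * Lp.comp (Fiter 2) * Sp.comp F := by
      show (Sp.comp (Fiter 2) * Qp 3 - Rp.comp (Fiter 2) * Lp.comp (Fiter 1) * Qp 2).comp F = _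
      simp only [sub_comp, mul_comp]
      rw [Polynomial.comp_assoc, Polynomial.comp_assoc, Polynomial.comp_assoc,
        Fiter_comp_F, Fiter_comp_F]
      rfl
    rw [h4F, h32, h3F]
    show Sp.comp (Fiter 3) * (Sp.comp (Fiter 2) * Qp 3 - Rp.comp (Fiter 2) * Lp.comp (Fiter 1) * Qp 2)
        - Rp.comp (Fiter 3) * Lp.comp (Fiter 2) * Qp 3 = _
    show Sp.comp (Fiter 3) * (Sp.comp (Fiter 2) * (Sp.comp (Fiter 1) * Sp - Rp.comp (Fiter 1) * Lp)
          - Rp.comp (Fiter 2) * Lp.comp (Fiter 1) * Sp)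
        - Rp.comp (Fiter 3) * Lp.comp (Fiter 2) * (Sp.comp (Fiter 1) * Sp - Rp.comp (Fiter 1) * Lp) = _
    rw [Fiter_one]
    ring
  intro m hm
  induction m using Nat.strong_induction_on with
  | _ m ih =>
    match m, hm with
    | 2, _ => exact base2
    | 3, _ => exact base3
    | 4, _ => exact base4
    | (n + 5), _ =>
      -- m = n + 5 ≥ 5; use the defining recursion of Qp (n+6) and the IH at n+4 and n+3.
      have ih1 := ih (n + 4) (by omega) (by omega)
      have ih2 := ih (n + 3) (by omega) (by omega)
      show Sp.comp (Fiter (n + 4)) * Qp (n + 5) - Rp.comp (Fiter (n + 4)) * Lp.comp (Fiter (n + 3)) * Qp (n + 4) = _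
      have e5 : Qp (n + 5) = Sp * (Qp (n+4)).comp F - Rp.comp F * Lp * (Qp (n+3)).comp (Fiter 2) := by
        simpa using ih1
      have e4 : Qp (n + 4) = Sp * (Qp (n+3)).comp F - Rp.comp F * Lp * (Qp (n+2)).comp (Fiter 2) := by
        simpa using ih2
      have c1 : (Qp (n + 5)).comp F = Sp.comp (Fiter (n+4)) * (Qp (n+4)).comp F
          - Rp.comp (Fiter (n+4)) * Lp.comp (Fiter (n+3)) * (Qp (n+3)).comp F := by
        show (Sp.comp (Fiter (n + 3)) * Qp (n + 4)
            - Rp.comp (Fiter (n + 3)) * Lp.comp (Fiter (n + 2)) * Qp (n + 3)).comp F = _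
        simp only [sub_comp, mul_comp]
        rw [Polynomial.comp_assoc, Polynomial.comp_assoc, Polynomial.comp_assoc,
          Fiter_comp_F, Fiter_comp_F]
      have c2 : (Qp (n + 4)).comp (Fiter 2) = Sp.comp (Fiter (n+4)) * (Qp (n+3)).comp (Fiter 2)
          - Rp.comp (Fiter (n+4)) * Lp.comp (Fiter (n+3)) * (Qp (n+2)).comp (Fiter 2) := by
        show (Sp.comp (Fiter (n + 2)) * Qp (n + 3)
            - Rp.comp (Fiter (n + 2)) * Lp.comp (Fiter (n + 1)) * Qp (n + 2)).comp (Fiter 2) = _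
        simp only [sub_comp, mul_comp]
        rw [Polynomial.comp_assoc, Polynomial.comp_assoc, Polynomial.comp_assoc,
          Fiter_comp_two, Fiter_comp_two]
      have goal : Sp.comp (Fiter (n + 4)) * Qp (n + 5)
          - Rp.comp (Fiter (n + 4)) * Lp.comp (Fiter (n + 3)) * Qp (n + 4)
          = Sp * (Qp (n + 5)).comp F - Rp.comp F * Lp * (Qp (n + 4)).comp (Fiter 2) := by
        rw [c1, c2, e5, e4]
        ring
      simpa using goal

/-! ### Dp recursion -/

lemma Dp_succ (m : ℕ) (hm : 2 ≤ m) : Dp (m + 1) = (X - C 2) * (Dp m).comp F := by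
  have hc : (Dp m).comp F = ∏ i ∈ Finset.range (m - 2), (Fiter (i+1) - C 2) := by
    rw [Dp]
    induction (m - 2) with
    | zero => simp
    | succ n ih =>
      rw [Finset.prod_range_succ, Finset.prod_range_succ, mul_comp, ih, sub_comp, C_comp,
        Fiter_comp_F]
  rw [hc, Dp]
  have h1 : m + 1 - 2 = (m - 2) + 1 := by omega
  rw [h1, Finset.prod_range_succ']
  show (∏ i ∈ Finset.range (m-2), (Fiter (i+1) - C 2)) * (Fiter 0 - C 2) = _
  have : Fiter 0 - C 2 = X - C 2 := rfl
  rw [this]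
  ring

end S5
end


open Function Polynomial

noncomputable section
namespace S5

/-- `Pm m` is the polynomial `P_m = Q_m / D_m`. -/
def Pm : ℕ → ℝ[X]
  | 0 => 1
  | 1 => 1
  | 2 => Sp
  | 3 => Qp 3 /ₘ (X - C 2)
  | n + 4 =>
      (Sp * (Pm (n+3)).comp F - C 2 * (C 5 - F) * Lp * (Pm (n+2)).comp (Fiter 2)) /ₘ (X - C 2)

lemma Sp_eval (x : ℝ) : Sp.eval x = (2 - x) * (4 - x) * (5 - x) - (14 - 3*x) := by
  simp [Sp]

lemma Lp_eval (x : ℝ) : Lp.eval x = x - 6 := by simp [Lp]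

lemma F_eval (x : ℝ) : F.eval x = x * (5 - x) := by simp [F]; ring

lemma Fiter2_eval (x : ℝ) : (Fiter 2).eval x = F.eval (F.eval x) := by
  rw [Fiter_two, eval_comp]

/-- The key recursion, at the level of the `P_m`, plus side identities. -/
lemma pack : ∀ m, 2 ≤ m →
    Pm m * Dp m = Qp m ∧
    (3 ≤ m → (Pm m).eval 6 = -(Pm (m-1)).eval (-6)) ∧
    (4 ≤ m → Pm m * (X - C 2)
      = Sp * (Pm (m-1)).comp F - C 2 * (C 5 - F) * Lp * (Pm (m-2)).comp (Fiter 2)) := by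
  have hQ3root : (Qp 3).eval 2 = 0 := by
    show (Sp.comp (Fiter 1) * Sp - Rp.comp (Fiter 1) * Lp).eval 2 = 0
    rw [Fiter_one]
    simp [Sp, Rp, Lp, F]
    norm_num
  have hP3 : Pm 3 * (X - C 2) = Qp 3 := by
    show (Qp 3 /ₘ (X - C 2)) * (X - C 2) = Qp 3
    rw [mul_comm]
    exact mul_divByMonic_eq_iff_isRoot.mpr hQ3root
  have base2 : Pm 2 * Dp 2 = Qp 2 := by
    show Sp * Dp 2 = Sp
    rw [Dp]
    norm_num
  have base3 : Pm 3 * Dp 3 = Qp 3 := by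
    have : Dp 3 = X - C 2 := by
      rw [Dp]
      show ∏ i ∈ Finset.range 1, (Fiter i - C 2) = X - C 2
      rw [Finset.prod_range_one]
      rfl
    rw [this, hP3]
  have hE3 : (Pm 3).eval 6 = -(Pm 2).eval (-6) := by
    have h1 : (Pm 3).eval 6 * (6 - 2) = (Qp 3).eval 6 := by
      have := congrArg (Polynomial.eval 6) hP3
      simpa using this
    have h2 : (Qp 3).eval 6 = -3392 := by
      show (Sp.comp (Fiter 1) * Sp - Rp.comp (Fiter 1) * Lp).eval 6 = -3392
      rw [Fiter_one]
      simp [Sp, Rp, Lp, F]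
      norm_num
    have h3 : (Pm 2).eval (-6) = 848 := by
      show Sp.eval (-6) = 848
      simp [Sp]; norm_num
    rw [h3]
    nlinarith [h1, h2]
  intro m hm
  induction m using Nat.strong_induction_on with
  | _ m ih =>
    match m, hm with
    | 2, _ => exact ⟨base2, by omega, by omega⟩
    | 3, _ => exact ⟨base3, fun _ => hE3, by omega⟩
    | (n + 4), _ =>
      -- inductive case
      have ih3 := ih (n + 3) (by omega) (by omega)
      have ih2 := ih (n + 2) (by omega) (by omega)
      obtain ⟨hPD3, hE3', _⟩ := ih3
      obtain ⟨hPD2, _, _⟩ := ih2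
      have hEprev : (Pm (n+3)).eval 6 = -(Pm (n+2)).eval (-6) := by
        have := hE3' (by omega)
        simpa using this
      -- the RHS of the key recursion
      set RHS : ℝ[X] :=
        Sp * (Pm (n+3)).comp F - C 2 * (C 5 - F) * Lp * (Pm (n+2)).comp (Fiter 2) with hRHS
      have hF2 : F.eval 2 = 6 := by rw [F_eval]; norm_num
      have hFF2 : (Fiter 2).eval 2 = -6 := by
        rw [Fiter2_eval, hF2, F_eval]; norm_num
      have hS2 : Sp.eval 2 = -8 := by rw [Sp_eval]; norm_num
      have hL2 : Lp.eval 2 = -4 := by rw [Lp_eval]; norm_num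
      have hroot : RHS.eval 2 = 0 := by
        rw [hRHS]
        have : (Sp * (Pm (n+3)).comp F
            - C 2 * (C 5 - F) * Lp * (Pm (n+2)).comp (Fiter 2)).eval 2
            = -8 * (Pm (n+3)).eval 6 - 8 * (Pm (n+2)).eval (-6) := by
          simp only [eval_sub, eval_mul, eval_comp, eval_C, hF2, hFF2, hS2, hL2]
          ring
        rw [this, hEprev]
        ring
      have hKEY : Pm (n + 4) * (X - C 2) = RHS := by
        show (RHS /ₘ (X - C 2)) * (X - C 2) = RHS
        rw [mul_comm]
        exact mul_divByMonic_eq_iff_isRoot.mpr hroot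
      refine ⟨?_, ?_, ?_⟩
      · -- Pm (n+4) * Dp (n+4) = Qp (n+4)
        have hQb : Qp (n + 4) = Sp * (Qp (n+3)).comp F - Rp.comp F * Lp * (Qp (n+2)).comp (Fiter 2) := by
          have := Qp_bottom (n + 3) (by omega)
          simpa using this
        have hD1 : Dp (n + 4) = (X - C 2) * (Dp (n+3)).comp F := Dp_succ (n+3) (by omega)
        have hD2 : Dp (n + 3) = (X - C 2) * (Dp (n+2)).comp F := Dp_succ (n+2) (by omega)
        have hD3 : (Dp (n+3)).comp F = (F - C 2) * (Dp (n+2)).comp (Fiter 2) := by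
          rw [hD2, mul_comp, sub_comp, C_comp, X_comp, Polynomial.comp_assoc, ← Fiter_two]
        calc Pm (n+4) * Dp (n+4)
            = (Pm (n+4) * (X - C 2)) * ((F - C 2) * (Dp (n+2)).comp (Fiter 2)) := by
              rw [hD1, hD3]; ring
          _ = RHS * ((F - C 2) * (Dp (n+2)).comp (Fiter 2)) := by rw [hKEY]
          _ = Sp * ((Pm (n+3)).comp F * (Dp (n+3)).comp F)
              - (C 2 * (F - C 2) * (C 5 - F)) * Lp
                * ((Pm (n+2)).comp (Fiter 2) * (Dp (n+2)).comp (Fiter 2)) := by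
              rw [hRHS, hD3]; ring
          _ = Sp * ((Pm (n+3) * Dp (n+3)).comp F)
              - Rp.comp F * Lp * ((Pm (n+2) * Dp (n+2)).comp (Fiter 2)) := by
              rw [RpF, mul_comp, mul_comp]
          _ = Sp * (Qp (n+3)).comp F - Rp.comp F * Lp * (Qp (n+2)).comp (Fiter 2) := by
              rw [hPD3, hPD2]
          _ = Qp (n+4) := hQb.symm
      · -- eval at 6
        intro _
        have hF6 : F.eval 6 = -6 := by rw [F_eval]; norm_num
        have hS6 : Sp.eval 6 = -4 := by rw [Sp_eval]; norm_num
        have hL6 : Lp.eval 6 = 0 := by rw [Lp_eval]; norm_num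
        have h := congrArg (Polynomial.eval 6) hKEY
        rw [hRHS] at h
        simp only [eval_sub, eval_mul, eval_comp, eval_C, eval_X, hF6, hS6, hL6] at h
        show (Pm (n+4)).eval 6 = -(Pm (n+3)).eval (-6)
        nlinarith [h]
      · intro _
        show Pm (n+4) * (X - C 2)
          = Sp * (Pm (n+3)).comp F - C 2 * (C 5 - F) * Lp * (Pm (n+2)).comp (Fiter 2)
        rw [hKEY, hRHS]

end S5
end


open Function Polynomial

noncomputable section
namespace S5

lemma Pm_unique {m : ℕ} (hm : 2 ≤ m) {P : ℝ[X]} (hP : P * Dp m = Qp m) : P = Pm m :=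
  mul_right_cancel₀ (Dp_ne_zero m) (hP.trans (pack m hm).1.symm)

lemma rm_succ (m : ℕ) (hm : 2 ≤ m) : rm (m + 1) = 2 * rm m + 2 := by
  obtain ⟨k, rfl⟩ : ∃ k, m = k + 2 := ⟨m - 2, by omega⟩
  show 2 ^ (k+3) + 2 ^ (k+1) - 2 = 2 * (2 ^ (k+2) + 2 ^ k - 2) + 2
  have h1 : 2 ^ (k+3) = 8 * 2 ^ k := by rw [pow_add]; ring
  have h2 : 2 ^ (k+2) = 4 * 2 ^ k := by rw [pow_add]; ring
  have h3 : 2 ^ (k+1) = 2 * 2 ^ k := by rw [pow_add]; ring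
  have h4 : 1 ≤ 2 ^ k := Nat.one_le_two_pow
  omega

lemma rm_ge (m : ℕ) (hm : 2 ≤ m) : 3 ≤ rm m := by
  obtain ⟨k, rfl⟩ : ∃ k, m = k + 2 := ⟨m - 2, by omega⟩
  show 3 ≤ 2 ^ (k+2) + 2 ^ k - 2
  have h2 : 2 ^ (k+2) = 4 * 2 ^ k := by rw [pow_add]; ring
  have h4 : 1 ≤ 2 ^ k := Nat.one_le_two_pow
  omega

lemma rm_two : rm 2 = 3 := by norm_num [rm]
lemma rm_three : rm 3 = 8 := by norm_num [rm]

/-! ### degrees and leading coefficients -/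

lemma Sp_natDegree : Sp.natDegree = 3 ∧ Sp.leadingCoeff = -1 := by
  have h : Sp = C (-1) * X^3 + C 11 * X^2 + C (-35) * X + C 26 := by
    rw [Sp]
    push_cast
    ring_nf
    simp only [map_neg, map_ofNat, map_one]
    ring
  rw [h]
  constructor
  · exact natDegree_cubic (by norm_num)
  · exact leadingCoeff_cubic (by norm_num)

lemma F_natDegree : F.natDegree = 2 ∧ F.leadingCoeff = -1 := by
  have h : F = C (-1) * X^2 + C 5 * X + C 0 := by
    rw [F]; simp only [map_neg, map_one, map_zero]; ring
  rw [h]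
  constructor
  · exact natDegree_quadratic (by norm_num)
  · exact leadingCoeff_quadratic (by norm_num)

lemma Sp_ne : Sp ≠ 0 := fun h => by
  have := Sp_natDegree.2; rw [h] at this; simp at this

lemma F_ne : F ≠ 0 := fun h => by
  have := F_natDegree.2; rw [h] at this; simp at this

lemma SpF_natDegree : (Sp.comp F).natDegree = 6 ∧ (Sp.comp F).leadingCoeff = 1 := by
  constructor
  · rw [natDegree_comp, Sp_natDegree.1, F_natDegree.1]
  · rw [leadingCoeff_comp (by rw [F_natDegree.1]; norm_num), Sp_natDegree.2, F_natDegree.2,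
      Sp_natDegree.1]
    norm_num

lemma Rp_natDegree : Rp.natDegree = 2 ∧ Rp.leadingCoeff = -2 := by
  have h : Rp = C (-2) * X^2 + C 14 * X + C (-20) := by
    rw [Rp]
    simp only [map_neg, map_ofNat]
    ring
  rw [h]
  exact ⟨natDegree_quadratic (by norm_num), leadingCoeff_quadratic (by norm_num)⟩

lemma Qp3_natDegree : (Qp 3).natDegree = 9 ∧ (Qp 3).leadingCoeff = -1 := by
  have hQ : Qp 3 = Sp.comp F * Sp - Rp.comp F * Lp := by
    show Sp.comp (Fiter 1) * Sp - Rp.comp (Fiter 1) * Lp = _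
    rw [Fiter_one]
  have hSpF := SpF_natDegree
  have hSpFne : Sp.comp F ≠ 0 := fun h => by rw [h] at hSpF; simp at hSpF
  have ht1deg : (Sp.comp F * Sp).natDegree = 9 := by
    rw [natDegree_mul hSpFne Sp_ne, hSpF.1, Sp_natDegree.1]
  have ht1lead : (Sp.comp F * Sp).leadingCoeff = -1 := by
    rw [leadingCoeff_mul, hSpF.2, Sp_natDegree.2]; norm_num
  have ht1ne : Sp.comp F * Sp ≠ 0 := fun h => by
    rw [h] at ht1lead; simp at ht1lead
  have hLpdeg : Lp.natDegree = 1 := by rw [Lp]; exact natDegree_X_sub_C 6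
  have hLpne : Lp ≠ 0 := fun h => by rw [h] at hLpdeg; simp at hLpdeg
  have hRpFne : Rp.comp F ≠ 0 := fun h => by
    have h2 : (Rp.comp F).natDegree = 4 := by
      rw [natDegree_comp, Rp_natDegree.1, F_natDegree.1]
    rw [h] at h2; simp at h2
  have ht2deg : (Rp.comp F * Lp).natDegree = 5 := by
    rw [natDegree_mul hRpFne hLpne, natDegree_comp, Rp_natDegree.1, F_natDegree.1, hLpdeg]
  have hlt : (Rp.comp F * Lp).natDegree < (Sp.comp F * Sp).natDegree := by
    rw [ht1deg, ht2deg]; norm_num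
  constructor
  · rw [hQ, natDegree_sub_eq_left_of_natDegree_lt hlt, ht1deg]
  · rw [hQ, leadingCoeff_sub_of_degree_lt (degree_lt_degree hlt), ht1lead]

lemma Dp3 : Dp 3 = X - C 2 := by
  rw [Dp]
  show ∏ i ∈ Finset.range 1, (Fiter i - C 2) = X - C 2
  rw [Finset.prod_range_one]
  rfl

/-- From `P * (X - C 2) = R` with `R` of known degree/leading coeff. -/
lemma deg_of_shift {P R : ℝ[X]} (h : P * (X - C 2) = R) {d : ℕ} {c : ℝ} (hc : c ≠ 0)
    (hdeg : R.natDegree = d) (hlead : R.leadingCoeff = c) (hd : 1 ≤ d) :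
    P.natDegree = d - 1 ∧ P.leadingCoeff = c := by
  have hRne : R ≠ 0 := fun h0 => by rw [h0] at hlead; simp at hlead; exact hc hlead.symm
  have hPne : P ≠ 0 := by
    intro h0; rw [h0, zero_mul] at h; exact hRne h.symm
  have hXne : (X - C (2:ℝ)) ≠ 0 := X_sub_C_ne_zero 2
  constructor
  · have := natDegree_mul hPne hXne
    rw [h, natDegree_X_sub_C] at this
    omega
  · have := leadingCoeff_mul P (X - C (2:ℝ))
    rw [h, (monic_X_sub_C (2:ℝ)).leadingCoeff, mul_one] at this
    rw [← this, hlead]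

lemma Pm3_deg : (Pm 3).natDegree = 8 ∧ (Pm 3).leadingCoeff = -1 := by
  have hP3 : Pm 3 * (X - C 2) = Qp 3 := by
    have := (pack 3 (by norm_num)).1
    rw [Dp3] at this
    exact this
  have := deg_of_shift hP3 (by norm_num : (-1:ℝ) ≠ 0) Qp3_natDegree.1 Qp3_natDegree.2 (by norm_num)
  simpa using this

lemma Fiter2_natDegree : (Fiter 2).natDegree = 4 ∧ (Fiter 2).leadingCoeff = -1 := by
  rw [Fiter_two]
  constructor
  · rw [natDegree_comp, F_natDegree.1]
  · rw [leadingCoeff_comp (by rw [F_natDegree.1]; norm_num), F_natDegree.2, F_natDegree.1]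
    norm_num

/-- degree and leading coefficient of `Pm m`. -/
lemma Pm_deg : ∀ m, 2 ≤ m →
    (Pm m).natDegree = rm m ∧ (Pm m).leadingCoeff = (-1 : ℝ)^(m + rm m) := by
  intro m hm
  induction m using Nat.strong_induction_on with
  | _ m ih =>
    match m, hm with
    | 2, _ => exact ⟨by rw [rm_two]; exact Sp_natDegree.1, by
                rw [rm_two]
                show Sp.leadingCoeff = (-1:ℝ)^(2+3)
                rw [Sp_natDegree.2]; norm_num⟩
    | 3, _ => constructor
              · rw [rm_three]; exact Pm3_deg.1
              · rw [rm_three]; rw [Pm3_deg.2]; norm_num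
    | (n + 4), _ =>
      have ih3 := ih (n + 3) (by omega) (by omega)
      have ih2 := ih (n + 2) (by omega) (by omega)
      have hKEY := (pack (n + 4) (by omega)).2.2 (by omega)
      have hr1 : rm (n + 4) = 2 * rm (n + 3) + 2 := rm_succ (n + 3) (by omega)
      have hr2 : rm (n + 3) = 2 * rm (n + 2) + 2 := rm_succ (n + 2) (by omega)
      set A := Pm (n + 3) with hA
      set B := Pm (n + 2) with hB
      have hAne : A ≠ 0 := fun h => by
        have := ih3.2; rw [h] at this; simp at this
        exact absurd this.symm (by positivity)
      have hBne : B ≠ 0 := fun h => by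
        have := ih2.2; rw [h] at this; simp at this
        exact absurd this.symm (by positivity)
      -- term 1
      have hACFne : A.comp F ≠ 0 := fun h => by
        have h2 := leadingCoeff_comp (p := A) (q := F) (by rw [F_natDegree.1]; norm_num)
        rw [h] at h2
        simp only [leadingCoeff_zero] at h2
        have := ih3.2
        rw [F_natDegree.2] at h2
        have h3 : A.leadingCoeff ≠ 0 := leadingCoeff_ne_zero.mpr hAne
        have h4 : ((-1:ℝ)) ^ A.natDegree ≠ 0 := by positivity
        exact absurd h2.symm (by
          exact mul_ne_zero h3 h4)
      have ht1deg : (Sp * A.comp F).natDegree = 3 + 2 * rm (n + 3) := by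
        rw [natDegree_mul Sp_ne hACFne, natDegree_comp, Sp_natDegree.1, F_natDegree.1, ih3.1]
        ring
      have ht1lead : (Sp * A.comp F).leadingCoeff = (-1:ℝ)^(n + 4 + rm (n + 4)) := by
        rw [leadingCoeff_mul, Sp_natDegree.2,
          leadingCoeff_comp (by rw [F_natDegree.1]; norm_num), ih3.2, F_natDegree.2, ih3.1]
        have hev : (-1:ℝ)^(n + 4 + rm (n + 4)) = (-1:ℝ)^(n+4) := by
          rw [hr1]
          rw [pow_add]
          have : (-1:ℝ) ^ (2 * rm (n+3) + 2) = 1 := by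
            rw [pow_add, pow_mul]
            norm_num
          rw [this, mul_one]
        rw [hev]
        rw [← pow_add]
        have : (-1:ℝ) * (-1:ℝ)^(n + 3 + rm (n+3) + rm (n+3)) = (-1:ℝ)^(n + 4 + 2 * rm (n+3)) := by
          rw [← pow_succ']
          congr 1
          omega
        rw [this, pow_add, pow_mul]
        norm_num
      -- term 2
      have hCne : (C 2 * (C 5 - F) * Lp : ℝ[X]) ≠ 0 := by
        intro h
        have : (C 2 * (C 5 - F) * Lp : ℝ[X]).eval 0 = 0 := by rw [h]; simp
        simp only [eval_mul, eval_sub, eval_C, Lp_eval, F_eval] at this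
        norm_num at this
      have hCdeg : (C 2 * (C 5 - F) * Lp : ℝ[X]).natDegree ≤ 3 := by
        calc (C 2 * (C 5 - F) * Lp : ℝ[X]).natDegree
            ≤ (C 2 * (C 5 - F) : ℝ[X]).natDegree + Lp.natDegree := natDegree_mul_le
          _ ≤ ((C 2 : ℝ[X]).natDegree + (C 5 - F : ℝ[X]).natDegree) + Lp.natDegree := by
              have := natDegree_mul_le (p := (C 2 : ℝ[X])) (q := (C 5 - F : ℝ[X]))
              omega
          _ ≤ 3 := by
              have h1 : (C (2:ℝ)).natDegree = 0 := natDegree_C 2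
              have h2 : (C 5 - F : ℝ[X]).natDegree ≤ 2 := by
                refine natDegree_sub_le_iff_left ?_ |>.mpr ?_
                · rw [F_natDegree.1]
                · rw [natDegree_C]; omega
              have h3 : Lp.natDegree = 1 := by rw [Lp]; exact natDegree_X_sub_C 6
              omega
      have hBC4ne : B.comp (Fiter 2) ≠ 0 := fun h => by
        have h2 := leadingCoeff_comp (p := B) (q := Fiter 2) (by rw [Fiter2_natDegree.1]; norm_num)
        rw [h] at h2
        simp only [leadingCoeff_zero] at h2
        rw [Fiter2_natDegree.2] at h2
        have h3 : B.leadingCoeff ≠ 0 := leadingCoeff_ne_zero.mpr hBne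
        have h4 : ((-1:ℝ)) ^ B.natDegree ≠ 0 := by positivity
        exact absurd h2.symm (mul_ne_zero h3 h4)
      have ht2deg : (C 2 * (C 5 - F) * Lp * B.comp (Fiter 2)).natDegree ≤ 3 + 4 * rm (n + 2) := by
        calc (C 2 * (C 5 - F) * Lp * B.comp (Fiter 2)).natDegree
            ≤ (C 2 * (C 5 - F) * Lp : ℝ[X]).natDegree + (B.comp (Fiter 2)).natDegree :=
              natDegree_mul_le
          _ ≤ 3 + 4 * rm (n + 2) := by
              have : (B.comp (Fiter 2)).natDegree = 4 * rm (n + 2) := by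
                rw [natDegree_comp, Fiter2_natDegree.1, ih2.1]; ring
              omega
      have hlt : (C 2 * (C 5 - F) * Lp * B.comp (Fiter 2)).natDegree
          < (Sp * A.comp F).natDegree := by
        rw [ht1deg]
        have : 3 + 4 * rm (n + 2) < 3 + 2 * rm (n + 3) := by omega
        omega
      have hRdeg : (Sp * A.comp F - C 2 * (C 5 - F) * Lp * B.comp (Fiter 2)).natDegree
          = 3 + 2 * rm (n + 3) := by
        rw [natDegree_sub_eq_left_of_natDegree_lt hlt, ht1deg]
      have hRlead : (Sp * A.comp F - C 2 * (C 5 - F) * Lp * B.comp (Fiter 2)).leadingCoeff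
          = (-1:ℝ)^(n + 4 + rm (n + 4)) := by
        rw [leadingCoeff_sub_of_degree_lt (degree_lt_degree hlt), ht1lead]
      have := deg_of_shift hKEY (c := (-1:ℝ)^(n + 4 + rm (n + 4))) (by positivity)
        hRdeg hRlead (by omega)
      constructor
      · rw [this.1]; omega
      · exact this.2

end S5
end


open Function Polynomial

noncomputable section
namespace S5

lemma neg_one_pow_cases (e : ℕ) :
    ((-1:ℝ)^e = 1 ∧ e % 2 = 0) ∨ ((-1:ℝ)^e = -1 ∧ e % 2 = 1) := by
  rcases Nat.even_or_odd e with h | h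
  · exact Or.inl ⟨h.neg_one_pow, Nat.even_iff.mp h⟩
  · exact Or.inr ⟨h.neg_one_pow, Nat.odd_iff.mp h⟩

lemma npow_par {e e' : ℕ} (h : e % 2 = e' % 2) : (-1:ℝ)^e = (-1:ℝ)^e' := by
  rcases neg_one_pow_cases e with ⟨h1, h2⟩ | ⟨h1, h2⟩ <;>
    rcases neg_one_pow_cases e' with ⟨h3, h4⟩ | ⟨h3, h4⟩ <;>
    first
      | omega
      | (rw [h1, h3])

/-- values of `Pm` at `0`: `(-1)^m (Pm m).eval 0` is positive and grows by factors `> 10`. -/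
lemma zeroval : ∀ m, 2 ≤ m →
    0 < (-1:ℝ)^m * (Pm m).eval 0 ∧
    10 * ((-1:ℝ)^m * (Pm m).eval 0) < (-1:ℝ)^(m+1) * (Pm (m+1)).eval 0 := by
  have hQ30 : (Qp 3).eval 0 = 556 := by
    show (Sp.comp (Fiter 1) * Sp - Rp.comp (Fiter 1) * Lp).eval 0 = 556
    rw [Fiter_one]
    simp [Sp, Rp, Lp, F]
    norm_num
  have hP30 : (Pm 3).eval 0 = -278 := by
    have hP3 : Pm 3 * (X - C 2) = Qp 3 := by
      have := (pack 3 (by norm_num)).1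
      rw [Dp3] at this; exact this
    have := congrArg (Polynomial.eval 0) hP3
    simp only [eval_mul, eval_sub, eval_X, eval_C, hQ30] at this
    linarith
  have hkey0 : ∀ n : ℕ, (Pm (n+4)).eval 0 * (-2)
      = 26 * (Pm (n+3)).eval 0 + 60 * (Pm (n+2)).eval 0 := by
    intro n
    have hKEY := (pack (n+4) (by omega)).2.2 (by omega)
    have := congrArg (Polynomial.eval 0) hKEY
    have hF0 : F.eval 0 = 0 := by rw [F_eval]; ring
    have hFF0 : (Fiter 2).eval 0 = 0 := Fiter_eval_zero 2
    have hS0 : Sp.eval 0 = 26 := by rw [Sp_eval]; norm_num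
    have hL0 : Lp.eval 0 = -6 := by rw [Lp_eval]; norm_num
    simp only [eval_mul, eval_sub, eval_comp, eval_X, eval_C, hF0, hFF0, hS0, hL0] at this
    have e1 : Pm (n+4-1) = Pm (n+3) := rfl
    have e2 : Pm (n+4-2) = Pm (n+2) := rfl
    rw [e1, e2] at this
    show (Pm (n+4)).eval 0 * (-2) = 26 * (Pm (n+3)).eval 0 + 60 * (Pm (n+2)).eval 0
    nlinarith [this]
  intro m hm
  induction m using Nat.strong_induction_on with
  | _ m ih =>
    match m, hm with
    | 2, _ =>
      constructor
      · show 0 < (-1:ℝ)^2 * Sp.eval 0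
        rw [Sp_eval]; norm_num
      · show 10 * ((-1:ℝ)^2 * Sp.eval 0) < (-1:ℝ)^3 * (Pm 3).eval 0
        rw [Sp_eval, hP30]; norm_num
    | (n + 3), _ =>
      have ihp := ih (n + 2) (by omega) (by omega)
      have h1 : 0 < (-1:ℝ)^(n+3) * (Pm (n+3)).eval 0 := lt_trans (by nlinarith [ihp.1]) ihp.2
      refine ⟨h1, ?_⟩
      have hrec := hkey0 n
      rcases neg_one_pow_cases (n+2) with ⟨he, hp⟩ | ⟨he, hp⟩
      · have h3 : (-1:ℝ)^(n+3) = -1 := by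
          rw [pow_succ, he]; norm_num
        have h4 : (-1:ℝ)^(n+4) = 1 := by
          rw [pow_succ, h3]; norm_num
        rw [h3] at h1 ⊢
        rw [show n + 3 + 1 = n + 4 from rfl, h4]
        rw [he] at ihp
        nlinarith [ihp.1, ihp.2, hrec]
      · have h3 : (-1:ℝ)^(n+3) = 1 := by
          rw [pow_succ, he]; norm_num
        have h4 : (-1:ℝ)^(n+4) = -1 := by
          rw [pow_succ, h3]; norm_num
        rw [h3] at h1 ⊢
        rw [show n + 3 + 1 = n + 4 from rfl, h4]
        rw [he] at ihp
        nlinarith [ihp.1, ihp.2, hrec]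

/-- value of `Pm (m+1)` at `5`. -/
lemma fiveval : ∀ m, 2 ≤ m → 0 < (-1:ℝ)^m * (Pm (m+1)).eval 5 := by
  intro m hm
  match m, hm with
  | 2, _ =>
    have hQ35 : (Qp 3).eval 5 = 6 := by
      show (Sp.comp (Fiter 1) * Sp - Rp.comp (Fiter 1) * Lp).eval 5 = 6
      rw [Fiter_one]
      simp [Sp, Rp, Lp, F]
      norm_num
    have hP3 : Pm 3 * (X - C 2) = Qp 3 := by
      have := (pack 3 (by norm_num)).1
      rw [Dp3] at this; exact this
    have := congrArg (Polynomial.eval 5) hP3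
    simp only [eval_mul, eval_sub, eval_X, eval_C, hQ35] at this
    show 0 < (-1:ℝ)^2 * (Pm 3).eval 5
    nlinarith [this]
  | (n + 3), _ =>
    have hKEY := (pack (n+4) (by omega)).2.2 (by omega)
    have := congrArg (Polynomial.eval 5) hKEY
    have hF5 : F.eval 5 = 0 := by rw [F_eval]; ring
    have hFF5 : (Fiter 2).eval 5 = 0 := by
      rw [Fiter2_eval, hF5, F_eval]; ring
    have hS5 : Sp.eval 5 = 1 := by rw [Sp_eval]; norm_num
    have hL5 : Lp.eval 5 = -1 := by rw [Lp_eval]; norm_num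
    simp only [eval_mul, eval_sub, eval_comp, eval_X, eval_C, hF5, hFF5, hS5, hL5] at this
    have e1 : Pm (n+4-1) = Pm (n+3) := rfl
    have e2 : Pm (n+4-2) = Pm (n+2) := rfl
    rw [e1, e2] at this
    -- this : (Pm (n+4)).eval 5 * (5 - 2) = ... v_{n+3} + 10 v_{n+2}
    have hz := zeroval (n+2) (by omega)
    rcases neg_one_pow_cases (n+2) with ⟨he, hp⟩ | ⟨he, hp⟩
    · have h3 : (-1:ℝ)^(n+3) = -1 := by rw [pow_succ, he]; norm_num
      rw [he] at hz
      rw [h3]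
      rw [show (-1:ℝ)^(n+2+1) = -1 from h3] at hz
      nlinarith [hz.1, hz.2, this]
    · have h3 : (-1:ℝ)^(n+3) = 1 := by rw [pow_succ, he]; norm_num
      rw [he] at hz
      rw [h3]
      rw [show (-1:ℝ)^(n+2+1) = 1 from h3] at hz
      nlinarith [hz.1, hz.2, this]

end S5
end


open Function Polynomial

noncomputable section
namespace S5

/-- sign of `Pm mm` at a point `t` lying above exactly the first `j'` roots. -/
lemma eval_sign {mm r j' : ℕ} {lam : ℕ → ℝ} {t : ℝ}
    (hP : Pm mm = C ((-1:ℝ)^(mm + r)) * ∏ k ∈ Finset.Icc 1 r, (X - C (lam k)))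
    (hj : j' ≤ r)
    (hlt : ∀ k, 1 ≤ k → k ≤ j' → lam k < t)
    (hgt : ∀ k, j' < k → k ≤ r → t < lam k) :
    0 < (-1:ℝ)^(mm + j') * (Pm mm).eval t := by
  rw [hP, eval_prod_form]
  have h := prod_sign hj hlt hgt
  have hpar : (mm + j') + (mm + r) ≡ r - j' [MOD 2] := by
    unfold Nat.ModEq
    omega
  calc (0:ℝ) < (-1:ℝ)^(r - j') * ∏ k ∈ Finset.Icc 1 r, (t - lam k) := h
  _ = (-1:ℝ)^(mm + j') * ((-1:ℝ)^(mm + r) * ∏ k ∈ Finset.Icc 1 r, (t - lam k)) := by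
      rw [← mul_assoc, ← pow_add, npow_par hpar]

/-- transfer of sign through the key identity, branch `phim`. -/
lemma final_phim {e : ℕ} {x mu W Ev : ℝ} (hx2 : x < 2) (hx6 : x < 6)
    (hid : Ev * (x - 2) = -2*(5-mu)*(x-6)*W)
    (hsign : 0 < (-1:ℝ)^(e+1) * ((5-mu)*W)) : 0 < (-1:ℝ)^e * Ev := by
  rcases neg_one_pow_cases e with ⟨h1, _⟩ | ⟨h1, _⟩ <;>
    rw [pow_succ, h1] at hsign <;> rw [h1] <;> nlinarith [hid, hsign, hx2, hx6]

/-- transfer of sign through the key identity, branch `phip`. -/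
lemma final_phip {e : ℕ} {x mu W Ev : ℝ} (hx2 : 2 < x) (hx6 : x < 6)
    (hid : Ev * (x - 2) = -2*(5-mu)*(x-6)*W)
    (hsign : 0 < (-1:ℝ)^(e+1) * ((5-mu)*W)) : 0 < (-1:ℝ)^(e+1) * Ev := by
  rcases neg_one_pow_cases e with ⟨h1, _⟩ | ⟨h1, _⟩ <;>
    rw [pow_succ, h1] at hsign ⊢ <;> nlinarith [hid, hsign, hx2, hx6]

/-- combine a sign fact with a positive factor, adjusting parity of the exponent. -/
lemma sign_mul_pos {e e' : ℕ} {A B : ℝ} (hpar : e % 2 = e' % 2)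
    (h : 0 < (-1:ℝ)^e * A) (hB : 0 < B) : 0 < (-1:ℝ)^e' * (B * A) := by
  rw [← npow_par hpar]
  rcases neg_one_pow_cases e with ⟨h1, _⟩ | ⟨h1, _⟩ <;> rw [h1] at h ⊢ <;> nlinarith

/-- combine a sign fact with a negative factor, adjusting parity of the exponent. -/
lemma sign_mul_neg {e e' : ℕ} {A B : ℝ} (hpar : (e+1) % 2 = e' % 2)
    (h : 0 < (-1:ℝ)^e * A) (hB : B < 0) : 0 < (-1:ℝ)^e' * (B * A) := by
  rw [← npow_par hpar, pow_succ]
  rcases neg_one_pow_cases e with ⟨h1, _⟩ | ⟨h1, _⟩ <;>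
    rw [h1] at h ⊢ <;> nlinarith

/-! ### localization of `f`-images -/

lemma fmap_above_m {y t : ℝ} (h1 : phim y < t) (h2 : t ≤ 5/2) (hy : y ≤ 25/4) : y < f t := by
  have := f_lt_f_left h1 h2
  rwa [f_phim hy] at this

lemma fmap_below_m {y t : ℝ} (h1 : t < phim y) (hy : y ≤ 25/4) : f t < y := by
  have := f_lt_f_left h1 phim_le
  rwa [f_phim hy] at this

lemma fmap_above_p {y t : ℝ} (h1 : phip y < t) (hy : y ≤ 25/4) : f t < y := by
  have := f_lt_f_right h1 phip_ge
  rwa [f_phip hy] at this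

lemma fmap_below_p {y t : ℝ} (h1 : t < phip y) (h2 : 5/2 ≤ t) (hy : y ≤ 25/4) : y < f t := by
  have := f_lt_f_right h1 h2
  rwa [f_phip hy] at this

lemma fmap_between {y mu : ℝ} (h1 : phim y < mu) (h2 : mu < phip y) (hy : y ≤ 25/4) :
    y < f mu := by
  rcases le_or_gt mu (5/2) with h | h
  · exact fmap_above_m h1 h hy
  · exact fmap_below_p h2 h.le hy

lemma f_pos {mu : ℝ} (h1 : 0 < mu) (h2 : mu < 5) : 0 < f mu := by
  unfold f; nlinarith

lemma f_neg {mu : ℝ} (h1 : 5 < mu) : f mu < 0 := by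
  unfold f; nlinarith

lemma phim_lt_phip {y : ℝ} (hy : y < 25/4) : phim y < phip y := by
  have h : 0 < Real.sqrt (25 - 4*y) := Real.sqrt_pos.mpr (by linarith)
  unfold phim phip; linarith

end S5
end


open Function Polynomial

noncomputable section
namespace S5

/-- The full induction invariant. -/
def Inv (m : ℕ) : Prop :=
  ∃ lam : ℕ → ℝ,
    StrictMonoOn lam (Set.Icc 1 (rm m)) ∧
    Pm m = C ((-1:ℝ)^(m + rm m)) * ∏ k ∈ Finset.Icc 1 (rm m), (X - C (lam k)) ∧
    0 < lam 1 ∧ lam (rm m - 1) < 5 ∧ 5 < lam (rm m) ∧ lam (rm m) < 6 ∧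
    ∀ k : ℕ, 1 ≤ k → k ≤ rm m →
      0 < (-1:ℝ)^(m + k - 1) * (Pm (m+1)).eval (phim (lam k)) ∧
      0 < (-1:ℝ)^(m + k) * (Pm (m+1)).eval (phip (lam k))

lemma P3key : Pm 3 * (X - C 2) = Qp 3 := by
  have := (pack 3 (by norm_num)).1
  rwa [Dp3] at this

lemma base_id {lam0 x : ℝ} (hfx : F.eval x = lam0) (hroot : Sp.eval lam0 = 0) :
    (Pm 3).eval x * (x - 2) = -2*(5-lam0)*(x-6)*(lam0-2) := by
  have h := congrArg (Polynomial.eval x) P3key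
  simp only [eval_mul, eval_sub, eval_X, eval_C] at h
  rw [h]
  show (Sp.comp (Fiter 1) * Sp - Rp.comp (Fiter 1) * Lp).eval x = _
  rw [Fiter_one]
  simp only [eval_mul, eval_sub, eval_comp, hfx, hroot]
  rw [show Rp.eval lam0 = -2*(2-lam0)*(5-lam0) by simp [Rp], Lp_eval]
  ring

lemma step_id {m : ℕ} (hm : 2 ≤ m) {mu x : ℝ} (hfx : F.eval x = mu)
    (hroot : (Pm (m+1)).eval mu = 0) :
    (Pm (m+2)).eval x * (x - 2) = -2*(5-mu)*(x-6)*((Pm m).eval (f mu)) := by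
  have hKEY := (pack (m+2) (by omega)).2.2 (by omega)
  have e1 : Pm (m+2-1) = Pm (m+1) := rfl
  have e2 : Pm (m+2-2) = Pm m := rfl
  rw [e1, e2] at hKEY
  have h := congrArg (Polynomial.eval x) hKEY
  simp only [eval_mul, eval_sub, eval_X, eval_C, eval_comp, hfx, Lp_eval] at h
  rw [hroot] at h
  have hFF : (Fiter 2).eval x = f mu := by
    rw [Fiter2_eval, hfx, F_eval]; unfold f; ring
  rw [hFF] at h
  rw [h]
  ring

lemma Sp_eval_vals : Sp.eval 0 = 26 ∧ Sp.eval 2 = -8 ∧ Sp.eval 5 = 1 ∧ Sp.eval 6 = -4 := by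
  refine ⟨?_, ?_, ?_, ?_⟩ <;> rw [Sp_eval] <;> norm_num

/-- Base case of the induction. -/
lemma base : Inv 2 := by
  obtain ⟨h0, h2, h5, h6⟩ := Sp_eval_vals
  obtain ⟨t1, ht1, hr1⟩ := exists_root_Ioo (P := Sp) (by norm_num : (0:ℝ) < 2)
    (by rw [h0, h2]; norm_num)
  obtain ⟨t2, ht2, hr2⟩ := exists_root_Ioo (P := Sp) (by norm_num : (2:ℝ) < 5)
    (by rw [h2, h5]; norm_num)
  obtain ⟨t3, ht3, hr3⟩ := exists_root_Ioo (P := Sp) (by norm_num : (5:ℝ) < 6)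
    (by rw [h5, h6]; norm_num)
  obtain ⟨ht1l, ht1r⟩ := ht1
  obtain ⟨ht2l, ht2r⟩ := ht2
  obtain ⟨ht3l, ht3r⟩ := ht3
  set lam : ℕ → ℝ := fun k => if k ≤ 1 then t1 else if k = 2 then t2 else t3 with hlam
  have hl1 : lam 1 = t1 := by norm_num [hlam]
  have hl2 : lam 2 = t2 := by norm_num [hlam]
  have hl3 : lam 3 = t3 := by norm_num [hlam]
  have hmono : StrictMonoOn lam (Set.Icc 1 (rm 2)) := by
    rw [rm_two]
    apply strictMonoOn_of_succ
    intro j hj1 hj2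
    have hj3 : j ≤ 2 := by omega
    interval_cases j
    · rw [hl1, hl2]; linarith
    · rw [hl2, hl3]; linarith
  have hroots : ∀ k, 1 ≤ k → k ≤ rm 2 → (Pm 2).eval (lam k) = 0 := by
    intro k h1 h2'
    rw [rm_two] at h2'
    interval_cases k
    · rw [hl1]; exact hr1
    · rw [hl2]; exact hr2
    · rw [hl3]; exact hr3
  have hdeg : (Pm 2).natDegree = rm 2 := (Pm_deg 2 le_rfl).1
  have hprod : Pm 2 = C ((-1:ℝ)^(2 + rm 2)) * ∏ k ∈ Finset.Icc 1 (rm 2), (X - C (lam k)) := by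
    have := prod_form (by rw [rm_two]; norm_num) hdeg hmono hroots
    rwa [(Pm_deg 2 le_rfl).2] at this
  refine ⟨lam, hmono, hprod, ?_, ?_, ?_, ?_, ?_⟩
  · rw [hl1]; exact ht1l
  · rw [rm_two]; show lam 2 < 5; rw [hl2]; exact ht2r
  · rw [rm_two, hl3]; exact ht3l
  · rw [rm_two, hl3]; exact ht3r
  · -- sign conditions for Pm 3
    intro k h1 h2'
    rw [rm_two] at h2'
    have main : ∀ l0 : ℝ, Sp.eval l0 = 0 → 0 < l0 → l0 < 6 →
        (0 < (-1:ℝ)^(k+2) * ((5 - l0) * (l0 - 2))) →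
        0 < (-1:ℝ)^(2 + k - 1) * (Pm 3).eval (phim l0) ∧
        0 < (-1:ℝ)^(2 + k) * (Pm 3).eval (phip l0) := by
      intro l0 hroot hpos h6' hsgn
      have hle : l0 ≤ 25/4 := by linarith
      have hidm := base_id (eval_phim hle) hroot
      have hidp := base_id (eval_phip hle) hroot
      have hxm2 : phim l0 < 2 := phim_lt_two h6'
      have hxm6 : phim l0 < 6 := by linarith
      have hxp2 : (2:ℝ) < phip l0 := by have := phip_gt h6'; linarith
      have hxp6 : phip l0 < 6 := by have := phip_lt_five hpos; linarith
      constructor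
      · have := final_phim (e := k+1) hxm2 hxm6 hidm hsgn
        rwa [show 2 + k - 1 = k + 1 by omega]
      · have := final_phip (e := k+1) hxp2 hxp6 hidp hsgn
        rw [show 2 + k = k + 2 by omega]
        rwa [npow_par (show (k+1+1) % 2 = (k+2) % 2 by omega)] at this
    interval_cases k
    · refine main t1 hr1 ht1l (by linarith) ?_ |>.imp (by rw [hl1]; exact id) (by rw [hl1]; exact id)
      norm_num
      nlinarith
    · refine main t2 hr2 (by linarith) (by linarith) ?_ |>.imp (by rw [hl2]; exact id) (by rw [hl2]; exact id)
      norm_num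
      nlinarith
    · refine main t3 hr3 (by linarith) (by linarith) ?_ |>.imp (by rw [hl3]; exact id) (by rw [hl3]; exact id)
      norm_num
      nlinarith

end S5
end


open Function Polynomial

noncomputable section
namespace S5

lemma step (m : ℕ) (hm : 2 ≤ m) (h : Inv m) : Inv (m+1) := by
  obtain ⟨lam, hmono, hprod, hl1, hl4, hl5, hl6, hsgn⟩ := h
  set r := rm m with hr
  have hr3 : 3 ≤ r := rm_ge m hm
  have hR : rm (m+1) = 2*r + 2 := rm_succ m hm
  have hlam_mono : ∀ i j, 1 ≤ i → i ≤ j → j ≤ r → lam i ≤ lam j := by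
    intro i j h1 h2 h3
    rcases eq_or_lt_of_le h2 with rfl | hlt
    · exact le_rfl
    · exact (hmono (Set.mem_Icc.mpr ⟨h1, by omega⟩) (Set.mem_Icc.mpr ⟨by omega, h3⟩) hlt).le
  have hlam_pos : ∀ k, 1 ≤ k → k ≤ r → 0 < lam k := fun k h1 h2 =>
    lt_of_lt_of_le hl1 (hlam_mono 1 k le_rfl h1 h2)
  have hlam6 : ∀ k, 1 ≤ k → k ≤ r → lam k < 6 := fun k h1 h2 =>
    lt_of_le_of_lt (hlam_mono k r h1 h2 le_rfl) hl6
  have hlam25 : ∀ k, 1 ≤ k → k ≤ r → lam k ≤ 25/4 := fun k h1 h2 => by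
    have := hlam6 k h1 h2; linarith
  -- anchors
  set a : ℕ → ℝ := fun j => if j = 0 then 0 else if j ≤ r then phim (lam j)
    else if j ≤ 2*r then phip (lam (2*r+1-j)) else if j = 2*r+1 then 5 else 6 with ha
  have ha0 : a 0 = 0 := by simp [ha]
  have haM : ∀ j, 1 ≤ j → j ≤ r → a j = phim (lam j) := by
    intro j h1 h2
    simp only [ha]
    rw [if_neg (by omega), if_pos h2]
  have haP : ∀ j, r+1 ≤ j → j ≤ 2*r → a j = phip (lam (2*r+1-j)) := by
    intro j h1 h2
    simp only [ha]
    rw [if_neg (by omega), if_neg (by omega), if_pos h2]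
  have ha5 : a (2*r+1) = 5 := by
    simp only [ha]
    rw [if_neg (by omega), if_neg (by omega), if_neg (by omega)]
    simp
  have ha6 : a (2*r+2) = 6 := by
    simp only [ha]
    rw [if_neg (by omega), if_neg (by omega), if_neg (by omega), if_neg (by omega)]
  -- adjacent ordering of anchors
  have hadj : ∀ j, 0 ≤ j → j + 1 ≤ 2*r+2 → a j < a (j+1) := by
    intro j _ hj2
    by_cases h0 : j = 0
    · subst h0
      rw [ha0, haM 1 le_rfl (by omega)]
      exact phim_pos (hlam_pos 1 le_rfl (by omega))
    by_cases hc1 : j + 1 ≤ r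
    · rw [haM j (by omega) (by omega), haM (j+1) (by omega) hc1]
      exact phim_strictMono
        (hmono (Set.mem_Icc.mpr ⟨by omega, by omega⟩) (Set.mem_Icc.mpr ⟨by omega, hc1⟩)
          (by omega))
        (hlam25 (j+1) (by omega) hc1)
    by_cases hc2 : j = r
    · subst hc2
      rw [haM r (by omega) le_rfl, haP (r+1) le_rfl (by omega),
        show 2*r+1-(r+1) = r by omega]
      exact phim_lt_phip (by have := hlam6 r (by omega) le_rfl; linarith)
    by_cases hc3 : j + 1 ≤ 2*r
    · rw [haP j (by omega) (by omega), haP (j+1) (by omega) hc3]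
      have hi1 : 1 ≤ 2*r-j := by omega
      have hi2 : 2*r+1-j ≤ r := by omega
      rw [show 2*r+1-(j+1) = 2*r-j by omega]
      exact phip_strictAnti
        (hmono (Set.mem_Icc.mpr ⟨hi1, by omega⟩) (Set.mem_Icc.mpr ⟨by omega, hi2⟩) (by omega))
        (hlam25 (2*r+1-j) (by omega) hi2)
    by_cases hc4 : j = 2*r
    · subst hc4
      rw [haP (2*r) (by omega) le_rfl, show 2*r+1-2*r = 1 by omega,
        show 2*r+1 = 2*r+1 from rfl, ha5]
      exact phip_lt_five (hlam_pos 1 le_rfl (by omega))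
    · have hj : j = 2*r+1 := by omega
      subst hj
      rw [ha5, show 2*r+1+1 = 2*r+2 by omega, ha6]
      norm_num
  have hamono : StrictMonoOn a (Set.Icc 0 (2*r+2)) := strictMonoOn_of_succ hadj
  -- signs at the anchors
  have hsa : ∀ j, j ≤ 2*r+2 → 0 < (-1:ℝ)^(m+1+j) * (Pm (m+1)).eval (a j) := by
    intro j hj
    by_cases h0 : j = 0
    · subst h0
      rw [ha0]
      have hz := zeroval m hm
      have h1 : 0 < (-1:ℝ)^(m+1) * (Pm (m+1)).eval 0 := by nlinarith [hz.1, hz.2]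
      simpa using h1
    by_cases hc1 : j ≤ r
    · rw [haM j (by omega) hc1]
      have := (hsgn j (by omega) hc1).1
      rwa [npow_par (show (m+1+j) % 2 = (m+j-1) % 2 by omega)]
    by_cases hc2 : j ≤ 2*r
    · rw [haP j (by omega) hc2]
      have hk1 : 1 ≤ 2*r+1-j := by omega
      have hk2 : 2*r+1-j ≤ r := by omega
      have := (hsgn (2*r+1-j) hk1 hk2).2
      rwa [npow_par (show (m+1+j) % 2 = (m+(2*r+1-j)) % 2 by omega)]
    by_cases hc3 : j = 2*r+1
    · subst hc3
      rw [ha5]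
      have := fiveval m hm
      rwa [npow_par (show (m+1+(2*r+1)) % 2 = m % 2 by omega)]
    · have hj2 : j = 2*r+2 := by omega
      subst hj2
      rw [ha6]
      have hE := (pack (m+1) (by omega)).2.1 (by omega)
      have e1 : Pm (m+1-1) = Pm m := rfl
      rw [e1] at hE
      have hes : 0 < (-1:ℝ)^(m+0) * (Pm m).eval (-6) := by
        apply eval_sign hprod (Nat.zero_le r)
        · intro k h1 h2; omega
        · intro k h1 h2
          have := hlam_pos k (by omega) h2
          linarith
      rw [hE, show (-(Pm m).eval (-6)) = (-1) * (Pm m).eval (-6) by ring]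
      exact sign_mul_neg (show (m+0+1) % 2 = (m+1+(2*r+2)) % 2 by omega) hes (by norm_num)
  -- existence of roots between consecutive anchors
  have hroot : ∀ j, 1 ≤ j → j ≤ 2*r+2 →
      ∃ t, t ∈ Set.Ioo (a (j-1)) (a j) ∧ (Pm (m+1)).eval t = 0 := by
    intro j h1 h2
    have hs1 := hsa (j-1) (by omega)
    have hs2 := hsa j h2
    have hab : a (j-1) < a j := by
      have := hadj (j-1) (by omega) (by omega)
      rwa [show j-1+1 = j by omega] at this
    apply exists_root_Ioo hab
    rcases neg_one_pow_cases (m+1+(j-1)) with ⟨he, hp⟩ | ⟨he, hp⟩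
    · rw [he] at hs1
      rw [npow_par (show (m+1+j) % 2 = (m+1+(j-1)+1) % 2 by omega), pow_succ, he] at hs2
      nlinarith
    · rw [he] at hs1
      rw [npow_par (show (m+1+j) % 2 = (m+1+(j-1)+1) % 2 by omega), pow_succ, he] at hs2
      nlinarith
  have hex : ∀ j : ℕ, ∃ t : ℝ, 1 ≤ j → j ≤ 2*r+2 →
      t ∈ Set.Ioo (a (j-1)) (a j) ∧ (Pm (m+1)).eval t = 0 := by
    intro j
    by_cases hc : 1 ≤ j ∧ j ≤ 2*r+2
    · obtain ⟨t, ht⟩ := hroot j hc.1 hc.2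
      exact ⟨t, fun _ _ => ht⟩
    · exact ⟨0, fun h1 h2 => absurd ⟨h1, h2⟩ hc⟩
  choose mu hmu using hex
  have hmem : ∀ j, 1 ≤ j → j ≤ 2*r+2 → a (j-1) < mu j ∧ mu j < a j := by
    intro j h1 h2
    exact ⟨(hmu j h1 h2).1.1, (hmu j h1 h2).1.2⟩
  have hmuroot : ∀ j, 1 ≤ j → j ≤ 2*r+2 → (Pm (m+1)).eval (mu j) = 0 := fun j h1 h2 =>
    (hmu j h1 h2).2
  -- basic bounds on the roots
  have hapos : ∀ j, j ≤ 2*r+2 → 0 ≤ a j := by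
    intro j hj
    rcases Nat.eq_zero_or_pos j with rfl | hj0
    · rw [ha0]
    · have := hamono (Set.mem_Icc.mpr ⟨le_rfl, by omega⟩) (Set.mem_Icc.mpr ⟨by omega, hj⟩)
        (by omega)
      rw [ha0] at this
      linarith
  have ha_le6 : ∀ j, j ≤ 2*r+2 → a j ≤ 6 := by
    intro j hj
    rcases eq_or_lt_of_le hj with rfl | hj0
    · rw [ha6]
    · have := hamono (Set.mem_Icc.mpr ⟨by omega, hj⟩) (Set.mem_Icc.mpr ⟨by omega, le_rfl⟩) hj0
      rw [ha6] at this
      linarith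
  have hmupos : ∀ j, 1 ≤ j → j ≤ 2*r+2 → 0 < mu j := by
    intro j h1 h2
    have := (hmem j h1 h2).1
    have h0 := hapos (j-1) (by omega)
    linarith
  have hmu6 : ∀ j, 1 ≤ j → j ≤ 2*r+2 → mu j < 6 := by
    intro j h1 h2
    have := (hmem j h1 h2).2
    have h0 := ha_le6 j h2
    linarith
  -- monotonicity of the new roots
  have hmono' : StrictMonoOn mu (Set.Icc 1 (rm (m+1))) := by
    rw [hR]
    apply strictMonoOn_of_succ
    intro j hj1 hj2
    have h1 : mu j < a j := (hmem j hj1 (by omega)).2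
    have h2 : a j < mu (j+1) := by
      have := (hmem (j+1) (by omega) hj2).1
      rwa [show j+1-1 = j by omega] at this
    linarith
  -- product form
  have hdeg' : (Pm (m+1)).natDegree = rm (m+1) := (Pm_deg (m+1) (by omega)).1
  have hprod' : Pm (m+1) = C ((-1:ℝ)^((m+1) + rm (m+1)))
      * ∏ k ∈ Finset.Icc 1 (rm (m+1)), (X - C (mu k)) := by
    have := prod_form (P := Pm (m+1)) (by omega) hdeg' hmono'
      (by intro k h1 h2; exact hmuroot k h1 (by omega))
    rwa [(Pm_deg (m+1) (by omega)).2] at this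
  refine ⟨mu, hmono', hprod', ?_, ?_, ?_, ?_, ?_⟩
  · have := (hmem 1 le_rfl (by omega)).1
    rwa [show (1:ℕ)-1 = 0 from rfl, ha0] at this
  · rw [hR, show 2*r+2-1 = 2*r+1 by omega]
    have := (hmem (2*r+1) (by omega) (by omega)).2
    rwa [ha5] at this
  · rw [hR]
    have := (hmem (2*r+2) (by omega) le_rfl).1
    rwa [show 2*r+2-1 = 2*r+1 by omega, ha5] at this
  · rw [hR]
    have := (hmem (2*r+2) (by omega) le_rfl).2
    rwa [ha6] at this
  · -- the sign conditions at level m+1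
    intro j hj1 hj2
    rw [hR] at hj2
    have hpos : 0 < (mu j) := hmupos j hj1 hj2
    have h6 : (mu j) < 6 := hmu6 j hj1 hj2
    have h25 : (mu j) ≤ 25/4 := by linarith
    have hrt : (Pm (m+1)).eval (mu j) = 0 := hmuroot j hj1 hj2
    have hidm := step_id hm (eval_phim h25) hrt
    have hidp := step_id hm (eval_phip h25) hrt
    -- the crucial sign of (5 - (mu j)) * (Pm m).eval (f (mu j))
    have hsgn' : 0 < (-1:ℝ)^(m+j+1) * ((5 - (mu j)) * (Pm m).eval (f (mu j))) := by
      by_cases hA : j ≤ r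
      · -- case A : mu j ∈ (a (j-1), phim (lam j))
        have hup : (mu j) < phim (lam j) := by
          have := (hmem j hj1 hj2).2
          rwa [haM j hj1 hA] at this
        have hm52 : (mu j) < 5/2 := lt_of_lt_of_le hup phim_le
        have hflt : f (mu j) < lam j := fmap_below_m hup (hlam25 j hj1 hA)
        have hgt : ∀ k, j-1 < k → k ≤ r → f (mu j) < lam k := by
          intro k h1 h2
          exact lt_of_lt_of_le hflt (hlam_mono j k hj1 (by omega) h2)
        have hlt : ∀ k, 1 ≤ k → k ≤ j-1 → lam k < f (mu j) := by
          intro k h1 h2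
          have hj2' : 2 ≤ j := by omega
          have hlow : phim (lam (j-1)) < (mu j) := by
            have := (hmem j hj1 hj2).1
            rwa [haM (j-1) (by omega) (by omega)] at this
          have hfgt : lam (j-1) < f (mu j) :=
            fmap_above_m hlow (by linarith) (hlam25 (j-1) (by omega) (by omega))
          exact lt_of_le_of_lt (hlam_mono k (j-1) h1 h2 (by omega)) hfgt
        have hes := eval_sign hprod (show j-1 ≤ r by omega) hlt hgt
        exact sign_mul_pos (show (m+(j-1)) % 2 = (m+j+1) % 2 by omega) hes (by linarith)
      by_cases hB : j = r + 1
      · -- case B : mu j ∈ (phim (lam r), phip (lam r))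
        subst hB
        have hlow : phim (lam r) < (mu (r+1)) := by
          have := (hmem (r+1) hj1 hj2).1
          rwa [show r+1-1 = r by omega, haM r (by omega) le_rfl] at this
        have hup : (mu (r+1)) < phip (lam r) := by
          have := (hmem (r+1) hj1 hj2).2
          rwa [haP (r+1) le_rfl (by omega), show 2*r+1-(r+1) = r by omega] at this
        have hf : lam r < f (mu (r+1)) := fmap_between hlow hup (hlam25 r (by omega) le_rfl)
        have h5 : (mu (r+1)) < 5 := by
          have := phip_lt_five (hlam_pos r (by omega) le_rfl)
          linarith
        have hes := eval_sign hprod (le_refl r)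
          (fun k h1 h2 => lt_of_le_of_lt (hlam_mono k r h1 h2 le_rfl) hf)
          (fun k h1 h2 => by omega)
        exact sign_mul_pos (show (m+r) % 2 = (m+(r+1)+1) % 2 by omega) hes (by linarith)
      by_cases hC : j ≤ 2*r+1
      · -- case C : r+2 ≤ j ≤ 2r+1
        have hj' : r+2 ≤ j := by omega
        set q := 2*r+2-j with hq
        have hq1 : 1 ≤ q := by omega
        have hqr : q ≤ r := by omega
        have hlow : phip (lam q) < (mu j) := by
          have := (hmem j hj1 hj2).1
          rwa [haP (j-1) (by omega) (by omega), show 2*r+1-(j-1) = q by omega] at this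
        have h52 : 5/2 ≤ (mu j) := le_of_lt (lt_of_le_of_lt phip_ge hlow)
        have hflt : f (mu j) < lam q := fmap_above_p hlow (hlam25 q hq1 hqr)
        have hgt : ∀ k, q-1 < k → k ≤ r → f (mu j) < lam k := fun k h1 h2 =>
          lt_of_lt_of_le hflt (hlam_mono q k hq1 (by omega) h2)
        have h5 : (mu j) < 5
        · by_cases hq2 : 2 ≤ q
          · have hup : (mu j) < phip (lam (q-1)) := by
              have := (hmem j hj1 hj2).2
              rwa [haP j (by omega) (by omega), show 2*r+1-j = q-1 by omega] at this
            have := phip_lt_five (hlam_pos (q-1) (by omega) (by omega))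
            linarith
          · have hjq : j = 2*r+1 := by omega
            have h2' := (hmem j hj1 hj2).2
            have he5 : a j = 5 := by rw [hjq]; exact ha5
            linarith [h2', he5]
        have hlt : ∀ k, 1 ≤ k → k ≤ q-1 → lam k < f (mu j) := by
          intro k h1 h2
          have hq2 : 2 ≤ q := by omega
          have hup : (mu j) < phip (lam (q-1)) := by
            have := (hmem j hj1 hj2).2
            rwa [haP j (by omega) (by omega), show 2*r+1-j = q-1 by omega] at this
          have hfgt : lam (q-1) < f (mu j) :=
            fmap_below_p hup h52 (hlam25 (q-1) (by omega) (by omega))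
          exact lt_of_le_of_lt (hlam_mono k (q-1) h1 h2 (by omega)) hfgt
        have hes := eval_sign hprod (show q-1 ≤ r by omega) hlt hgt
        exact sign_mul_pos (show (m+(q-1)) % 2 = (m+j+1) % 2 by omega) hes (by linarith)
      · -- case D : j = 2r+2, mu j ∈ (5,6)
        have hj' : j = 2*r+2 := by omega
        have h5 : 5 < (mu j) := by
          have h1' := (hmem j hj1 hj2).1
          have he5 : a (j-1) = 5 := by
            rw [hj', show 2*r+2-1 = 2*r+1 by omega]; exact ha5
          linarith [h1', he5]
        have hfneg : f (mu j) < 0 := f_neg h5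
        have hes : 0 < (-1:ℝ)^(m+0) * (Pm m).eval (f (mu j)) := by
          apply eval_sign hprod (Nat.zero_le r)
          · intro k h1 h2; omega
          · intro k h1 h2
            have := hlam_pos k h1 h2
            linarith
        exact sign_mul_neg (show (m+0+1) % 2 = (m+j+1) % 2 by omega) hes (by linarith)
    constructor
    · have hx2 : phim (mu j) < 2 := phim_lt_two h6
      have hx6 : phim (mu j) < 6 := by linarith
      have := final_phim (e := m+j) hx2 hx6 hidm hsgn'
      rwa [show m+1+j-1 = m+j by omega]
    · have hx2 : (2:ℝ) < phip (mu j) := by have := phip_gt h6; linarith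
      have hx6 : phip (mu j) < 6 := by have := phip_lt_five hpos; linarith
      have := final_phip (e := m+j) hx2 hx6 hidp hsgn'
      rwa [show m+1+j = m+j+1 by omega]

end S5
end


noncomputable section
namespace S5
lemma Inv_all : ∀ m, 2 ≤ m → Inv m := by
  intro m hm
  induction m, hm using Nat.le_induction with
  | base => exact base
  | succ n hn ih => exact step n hn ih
end S5
end

theorem statement_5 (m : ℕ) (hm : 2 ≤ m) (P P' : ℝ[X])
    (hP : P * Dp m = Qp m) (hP' : P' * Dp (m + 1) = Qp (m + 1)) :
    ∃ lam : ℕ → ℝ,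
      StrictMonoOn lam (Set.Icc 1 (rm m)) ∧
      (∀ x : ℝ, P.eval x = 0 ↔ ∃ k : ℕ, 1 ≤ k ∧ k ≤ rm m ∧ lam k = x) ∧
      0 < lam 1 ∧ lam (rm m - 1) < 5 ∧ 5 < lam (rm m) ∧ lam (rm m) < 6 ∧
      ∀ k : ℕ, 1 ≤ k → k ≤ rm m →
        0 < (-1 : ℝ) ^ (m + k - 1) * P'.eval (phim (lam k)) ∧
        0 < (-1 : ℝ) ^ (m + k) * P'.eval (phip (lam k)) := by
  have hP1 : P = S5.Pm m := S5.Pm_unique hm hP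
  have hP2 : P' = S5.Pm (m+1) := S5.Pm_unique (by omega) hP'
  obtain ⟨lam, hmono, hprod, hl1, hl4, hl5, hl6, hsgn⟩ := S5.Inv_all m hm
  refine ⟨lam, hmono, ?_, hl1, hl4, hl5, hl6, ?_⟩
  · intro x
    rw [hP1, hprod]
    exact S5.roots_char (by positivity) (rm m) lam x
  · intro k h1 h2
    rw [hP2]
    exact hsgn k h1 h2
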